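/- Let P be a row-stochastic matrix indexed by state-action pairs and γ ∈ (0,1). Let V* and Q* satisfy the Bellman relation Q* = r + γ P V* with 0 ≤ r ≤ 1 and 0 ≤ Q* ≤ 1/(1-γ) entrywise, and define Var_P(V*) = P(V* ∘ V*) - (PV*) ∘ (PV*). Then for any row-stochastic matrix M, Var_P(V*) ≤ (1/γ)(γ M (Q* ∘ Q*) - Q* ∘ Q*) + (2/γ²) Q* ∘ r + (4/(1-γ)) δ · 1 entrywise, whenever M(Q*∘Q*) and P^{π*}(Q*∘Q*) differ by at most (4/(1-γ)) δ in sup norm, where P^{π*} is the transition matrix under the optimal policy and δ ≥ 0. -/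

import Mathlib

theorem stmt5 {S A : Type*} [Fintype S] [Fintype A] [Nonempty A] [DecidableEq A]
    (γ : ℝ) (hγ : 0 < γ ∧ γ < 1) (δ : ℝ) (hδ : 0 ≤ δ)
    (P : S × A → S → ℝ) (hP : ∀ sa, (∀ s', 0 ≤ P sa s') ∧ ∑ s', P sa s' = 1)
    (M : S × A → S × A → ℝ) (hM : ∀ sa, (∀ sa', 0 ≤ M sa sa') ∧ ∑ sa', M sa sa' = 1)
    (r Qstar : S × A → ℝ) (Vstar : S → ℝ)
    (hr : ∀ sa, 0 ≤ r sa ∧ r sa ≤ 1)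
    (hQ : ∀ sa, 0 ≤ Qstar sa ∧ Qstar sa ≤ 1 / (1 - γ))
    (hVs : ∀ s, Vstar s = ⨆ a, Qstar (s, a))
    (hBellman : ∀ sa, Qstar sa = r sa + γ * ∑ s', P sa s' * Vstar s')
    (π : S → A) (hπ : ∀ s, Qstar (s, π s) = Vstar s)
    (Pπ : S × A → S × A → ℝ)
    (hPπ : ∀ sa s' a', Pπ sa (s', a') = P sa s' * (if a' = π s' then 1 else 0))
    (hclose : ∀ sa, |(∑ sa', M sa sa' * (Qstar sa') ^ 2)
        - ∑ sa', Pπ sa sa' * (Qstar sa') ^ 2| ≤ 4 / (1 - γ) * δ) :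
    ∀ sa, ∑ s', P sa s' * (Vstar s') ^ 2 - (∑ s', P sa s' * Vstar s') ^ 2
      ≤ (1 / γ) * (γ * ∑ sa', M sa sa' * (Qstar sa') ^ 2 - (Qstar sa) ^ 2)
        + (2 / γ ^ 2) * (Qstar sa * r sa) + (4 / (1 - γ)) * δ := by
  obtain ⟨hγ0, hγ1⟩ := hγ
  intro sa
  have h1 : ∑ sa' : S × A, Pπ sa sa' * (Qstar sa') ^ 2
      = ∑ s', P sa s' * (Vstar s') ^ 2 := by
    rw [Fintype.sum_prod_type]
    refine Finset.sum_congr rfl fun s' _ => ?_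
    have : ∀ a', Pπ sa (s', a') * (Qstar (s', a')) ^ 2
        = P sa s' * (if a' = π s' then (Qstar (s', a')) ^ 2 else 0) := by
      intro a'; rw [hPπ]; split <;> ring
    simp_rw [this, ← Finset.mul_sum, Finset.sum_ite_eq' Finset.univ (π s'),
      Finset.mem_univ, if_pos, hπ]
  have h2 : γ * ∑ s', P sa s' * Vstar s' = Qstar sa - r sa := by
    have := hBellman sa; linarith
  have hPV : (∑ s', P sa s' * Vstar s') = (Qstar sa - r sa) / γ := by
    field_simp at h2 ⊢; linarith
  have hc := hclose sa
  have hc' : (∑ sa' : S × A, Pπ sa sa' * (Qstar sa') ^ 2)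
      ≤ (∑ sa', M sa sa' * (Qstar sa') ^ 2) + 4 / (1 - γ) * δ := by
    have := abs_le.mp hc; linarith
  rw [← h1, hPV]
  have hQ0 := (hQ sa).1
  have hr0 := (hr sa).1
  have hγ2 : (0:ℝ) < γ ^ 2 := by positivity
  rw [div_pow]
  have key : Qstar sa ^ 2 / γ - 2 / γ ^ 2 * (Qstar sa * r sa)
      ≤ (Qstar sa - r sa) ^ 2 / γ ^ 2 := by
    have e : (Qstar sa - r sa) ^ 2 / γ ^ 2
        - (Qstar sa ^ 2 / γ - 2 / γ ^ 2 * (Qstar sa * r sa))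
        = (Qstar sa ^ 2 + r sa ^ 2 - γ * Qstar sa ^ 2) / γ ^ 2 := by
      field_simp; ring
    have hnum : (0:ℝ) ≤ Qstar sa ^ 2 + r sa ^ 2 - γ * Qstar sa ^ 2 := by nlinarith
    have := div_nonneg hnum hγ2.le
    linarith
  have expand : (1 / γ) * (γ * ∑ sa', M sa sa' * (Qstar sa') ^ 2 - (Qstar sa) ^ 2)
      = (∑ sa', M sa sa' * (Qstar sa') ^ 2) - Qstar sa ^ 2 / γ := by
    field_simp
  rw [expand]
  linarith
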